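/- For oriented graphs Γ and Δ, given vertices x, y in Γ, vertices v, w in Δ, a nonnegative integer n, and a signature σ ∈ {±1}ⁿ, there is a bijection between the set of paths of signature σ from (x,v) to (y,w) in the underlying graph of Γ ⊗ Δ and the set of pairs (q, r) where q is a path of signature σ from x to y in the underlying graph of Γ and r is a path of signature σ from v to w in the underlying graph of Δ. -/

import Mathlib

/-- An oriented (multi)graph: vertices, edges, initial and terminal maps. -/
structure OGraph where
  V : Type
  E : Type
  ι : E → V
  τ : E → V

namespace OGraph

/-- Tensor product of oriented graphs. -/
def tensor (G H : OGraph) : OGraph where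
  V := G.V × H.V
  E := G.E × H.E
  ι e := (G.ι e.1, H.ι e.2)
  τ e := (G.τ e.1, H.τ e.2)

/-- Paths in the underlying non-oriented graph of an oriented graph, indexed by their
signature `σ : List Bool` (`true` = +1, an edge of `G` traversed positively;
`false` = −1, a formal inverse edge), together with initial and final vertices. -/
inductive SPath (G : OGraph) : List Bool → G.V → G.V → Type
  | nil (v : G.V) : SPath G [] v v
  | fwd {σ : List Bool} {z : G.V} (e : G.E) (p : SPath G σ (G.τ e) z) :
      SPath G (true :: σ) (G.ι e) z
  | bwd {σ : List Bool} {z : G.V} (e : G.E) (p : SPath G σ (G.ι e) z) :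
      SPath G (false :: σ) (G.τ e) z

end OGraph


namespace OGraph

def toPair (G H : OGraph) : ∀ {σ : List Bool} {a b : (G.tensor H).V},
    (G.tensor H).SPath σ a b → G.SPath σ a.1 b.1 × H.SPath σ a.2 b.2
  | _, _, _, .nil u => (.nil u.1, .nil u.2)
  | _, _, _, .fwd e p => ((toPair G H p).1.fwd e.1, (toPair G H p).2.fwd e.2)
  | _, _, _, .bwd e p => ((toPair G H p).1.bwd e.1, (toPair G H p).2.bwd e.2)

def ofPair (G H : OGraph) : ∀ {σ : List Bool} {a₁ b₁ : G.V} {a₂ b₂ : H.V},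
    G.SPath σ a₁ b₁ → H.SPath σ a₂ b₂ → (G.tensor H).SPath σ (a₁, a₂) (b₁, b₂)
  | _, _, _, _, _, .nil u, .nil u' => SPath.nil (G := G.tensor H) (u, u')
  | _, _, _, _, _, .fwd e p, .fwd f q => .fwd (e, f) (ofPair G H p q)
  | _, _, _, _, _, .bwd e p, .bwd f q => .bwd (e, f) (ofPair G H p q)

theorem to_of (G H : OGraph) : ∀ {σ : List Bool} {a₁ b₁ : G.V} {a₂ b₂ : H.V}
    (p : G.SPath σ a₁ b₁) (q : H.SPath σ a₂ b₂),
    toPair G H (ofPair G H p q) = (p, q)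
  | _, _, _, _, _, .nil _, .nil _ => rfl
  | _, _, _, _, _, .fwd e p, .fwd f q => by
      show toPair G H (.fwd (G := G.tensor H) (e, f) (ofPair G H p q)) = _
      simp [ofPair, toPair, to_of G H p q]
      exact Prod.ext (congrArg (SPath.fwd e) (congrArg Prod.fst (to_of G H p q))) (congrArg (SPath.fwd f) (congrArg Prod.snd (to_of G H p q)))
  | _, _, _, _, _, .bwd e p, .bwd f q => by
      show toPair G H (.bwd (G := G.tensor H) (e, f) (ofPair G H p q)) = _
      simp [ofPair, toPair, to_of G H p q]
      exact Prod.ext (congrArg (SPath.bwd e) (congrArg Prod.fst (to_of G H p q))) (congrArg (SPath.bwd f) (congrArg Prod.snd (to_of G H p q)))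

theorem of_to (G H : OGraph) : ∀ {σ : List Bool} {a b : (G.tensor H).V}
    (p : (G.tensor H).SPath σ a b),
    ofPair G H (toPair G H p).1 (toPair G H p).2 = p
  | _, _, _, .nil _ => rfl
  | _, _, _, .fwd e p => by
      simp [toPair, ofPair, of_to G H p]; exact congrArg (SPath.fwd e) (of_to G H p)
  | _, _, _, .bwd e p => by
      simp [toPair, ofPair, of_to G H p]; exact congrArg (SPath.bwd e) (of_to G H p)

end OGraph

/-- For oriented graphs `G`, `H`, vertices `x y : G.V`, `v w : H.V`
and a signature `σ ∈ {±1}ⁿ`, the paths of signature `σ` from `(x,v)` to `(y,w)` in the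
underlying graph of `G ⊗ H` are in bijection with pairs of a path of signature `σ`
from `x` to `y` in `G` and one from `v` to `w` in `H`. -/
theorem tensor_path_bijection (G H : OGraph) (x y : G.V) (v w : H.V) (σ : List Bool) :
    Nonempty ((G.tensor H).SPath σ (x, v) (y, w) ≃ (G.SPath σ x y × H.SPath σ v w)) := by
  exact ⟨{
    toFun := fun p => OGraph.toPair G H p
    invFun := fun pq => OGraph.ofPair G H pq.1 pq.2
    left_inv := fun p => OGraph.of_to G H p
    right_inv := fun pq => OGraph.to_of G H pq.1 pq.2 }⟩
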